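/- Let n ≥ 1, let Γ_0,…,Γ_{2n−1} be the n-qubit Jordan–Wigner Majorana operators Γ_{2i} := Z^{⊗i} ⊗ X ⊗ I^{⊗(n−1−i)}, Γ_{2i+1} := Z^{⊗i} ⊗ Y ⊗ I^{⊗(n−1−i)}, and let I ⊆ {0,…,n−1}. On (ℂ²)^{⊗(n+1)} define the stabilizer S := Z_I ⊗ Z (Pauli Z on each qubit in I, identity on the other first-n qubits, and Z on the ancilla) and the modified Majorana operators μ_k := Γ_k ⊗ X if ⌊k/2⌋ ∈ I and μ_k := Γ_k ⊗ I₂ otherwise, for k ∈ {0,…,2n−1}. Then: (1) S is self-adjoint and S² = I; (2) each μ_k is self-adjoint; (3) μ_j μ_k + μ_k μ_j = 2δ_{jk} I for all j,k; and (4) μ_k S = S μ_k for all k. -/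

import Mathlib

open Matrix Finset
open scoped symmDiff

namespace FQ

/-- Pauli X. -/
noncomputable def X : Matrix (ZMod 2) (ZMod 2) ℂ := !![0, 1; 1, 0]

/-- Pauli Y. -/
noncomputable def Y : Matrix (ZMod 2) (ZMod 2) ℂ := !![0, -Complex.I; Complex.I, 0]

/-- Pauli Z. -/
noncomputable def Z : Matrix (ZMod 2) (ZMod 2) ℂ := !![1, 0; 0, -1]

/-- Tensor product `M 0 ⊗ M 1 ⊗ ⋯ ⊗ M (n-1)` of a family of single-qubit operators, as a
`2^n × 2^n` matrix indexed by functions `Fin n → ZMod 2`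
(the identification of `(ℂ²)^⊗n` with `ℂ^(2^n)`). -/
noncomputable def tens {n : ℕ} (M : Fin n → Matrix (ZMod 2) (ZMod 2) ℂ) :
    Matrix (Fin n → ZMod 2) (Fin n → ZMod 2) ℂ :=
  Matrix.of fun f g => ∏ i, M i (f i) (g i)

/-- The `n`-qubit Jordan–Wigner Majorana operators:
`gamma n (2i) = Z^⊗i ⊗ X ⊗ I^⊗(n-1-i)` and `gamma n (2i+1) = Z^⊗i ⊗ Y ⊗ I^⊗(n-1-i)`. -/
noncomputable def gamma (n k : ℕ) : Matrix (Fin n → ZMod 2) (Fin n → ZMod 2) ℂ :=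
  tens fun j => if (j : ℕ) < k / 2 then Z
    else if (j : ℕ) = k / 2 then (if k % 2 = 0 then X else Y) else 1

/-- The Pauli string `X_S`: Pauli `X` on each tensor factor in `S`, identity elsewhere. -/
noncomputable def Xstr {n : ℕ} (S : Finset (Fin n)) :
    Matrix (Fin n → ZMod 2) (Fin n → ZMod 2) ℂ :=
  tens fun j => if j ∈ S then X else 1

/-- The Pauli string `Y_S`: Pauli `Y` on each tensor factor in `S`, identity elsewhere. -/
noncomputable def Ystr {n : ℕ} (S : Finset (Fin n)) :
    Matrix (Fin n → ZMod 2) (Fin n → ZMod 2) ℂ :=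
  tens fun j => if j ∈ S then Y else 1

/-- The Pauli string `Z_S`: Pauli `Z` on each tensor factor in `S`, identity elsewhere. -/
noncomputable def Zstr {n : ℕ} (S : Finset (Fin n)) :
    Matrix (Fin n → ZMod 2) (Fin n → ZMod 2) ℂ :=
  tens fun j => if j ∈ S then Z else 1

/-- The operator `A ⊗ M` on `(ℂ²)^⊗(n+1)`: `A` on the first `n` qubits and the single-qubit
operator `M` on the ancilla qubit. -/
noncomputable def extend {n : ℕ} (A : Matrix (Fin n → ZMod 2) (Fin n → ZMod 2) ℂ)
    (M : Matrix (ZMod 2) (ZMod 2) ℂ) :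
    Matrix (Fin (n + 1) → ZMod 2) (Fin (n + 1) → ZMod 2) ℂ :=
  Matrix.of fun f g =>
    A (fun j => f j.castSucc) (fun j => g j.castSucc) * M (f (Fin.last n)) (g (Fin.last n))

/-- The stabilizer `S = Z_I ⊗ Z` on `(ℂ²)^⊗(n+1)`: Pauli `Z` on each qubit in `I`, identity on
the other first-`n` qubits, and `Z` on the ancilla. -/
noncomputable def stab (n : ℕ) (I : Finset (Fin n)) :
    Matrix (Fin (n + 1) → ZMod 2) (Fin (n + 1) → ZMod 2) ℂ :=
  extend (Zstr I) Z

/-- The modified Majorana operators `μ_k = Γ_k ⊗ X` if `⌊k/2⌋ ∈ I` and `μ_k = Γ_k ⊗ I₂`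
otherwise. -/
noncomputable def mu (n : ℕ) (I : Finset (Fin n)) (k : ℕ) :
    Matrix (Fin (n + 1) → ZMod 2) (Fin (n + 1) → ZMod 2) ℂ :=
  if h : k / 2 < n then
    (if (⟨k / 2, h⟩ : Fin n) ∈ I then extend (gamma n k) X else extend (gamma n k) 1)
  else extend (gamma n k) 1

lemma mul2 (A B : Matrix (ZMod 2) (ZMod 2) ℂ) (i j : ZMod 2) :
    (A*B) i j = A i (0 : Fin 2) * B (0 : Fin 2) j + A i (1 : Fin 2) * B (1 : Fin 2) j := by
  rw [Matrix.mul_apply]; exact Fin.sum_univ_two _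

lemma X_mul_X : X * X = 1 := by
  ext i j; rw [mul2, Matrix.one_apply]; fin_cases i <;> fin_cases j <;> simp [X] <;>
    [rfl; (intro h; cases h); (intro h; cases h); rfl]
lemma Y_mul_Y : Y * Y = 1 := by
  ext i j; rw [mul2, Matrix.one_apply]; fin_cases i <;> fin_cases j <;>
    simp [Y, Complex.I_mul_I] <;> [rfl; (intro h; cases h); (intro h; cases h); rfl]
lemma Z_mul_Z : Z * Z = 1 := by
  ext i j; rw [mul2, Matrix.one_apply]; fin_cases i <;> fin_cases j <;> simp [Z] <;>
    [rfl; (intro h; cases h); (intro h; cases h); rfl]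
lemma X_mul_Y : X * Y = (-1 : ℂ) • (Y * X) := by
  ext i j; rw [Matrix.smul_apply, mul2, mul2]; fin_cases i <;> fin_cases j <;> simp [X, Y]
lemma X_mul_Z : X * Z = (-1 : ℂ) • (Z * X) := by
  ext i j; rw [Matrix.smul_apply, mul2, mul2]; fin_cases i <;> fin_cases j <;> simp [X, Z]
lemma Y_mul_Z : Y * Z = (-1 : ℂ) • (Z * Y) := by
  ext i j; rw [Matrix.smul_apply, mul2, mul2]; fin_cases i <;> fin_cases j <;> simp [Y, Z]
lemma X_herm : Xᴴ = X := by
  ext i j; rw [Matrix.conjTranspose_apply]; fin_cases i <;> fin_cases j <;> simp [X]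
lemma Y_herm : Yᴴ = Y := by
  ext i j; rw [Matrix.conjTranspose_apply]; fin_cases i <;> fin_cases j <;>
    simp [Y, Complex.star_def, Complex.conj_I]
lemma Z_herm : Zᴴ = Z := by
  ext i j; rw [Matrix.conjTranspose_apply]; fin_cases i <;> fin_cases j <;> simp [Z]


lemma tens_mul {n : ℕ} (M N : Fin n → Matrix (ZMod 2) (ZMod 2) ℂ) :
    tens M * tens N = tens (fun i => M i * N i) := by
  ext f g
  symm
  calc tens (fun i => M i * N i) f g
      = ∏ i, ∑ x : ZMod 2, M i (f i) x * N i x (g i) := by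
        simp [tens, Matrix.mul_apply]
    _ = ∑ h ∈ Fintype.piFinset (fun _ : Fin n => (univ : Finset (ZMod 2))),
          ∏ i, M i (f i) (h i) * N i (h i) (g i) := Finset.prod_univ_sum _ _
    _ = (tens M * tens N) f g := by
        rw [Fintype.piFinset_univ]
        simp [tens, Matrix.mul_apply, Finset.prod_mul_distrib]

lemma tens_conjTranspose {n : ℕ} (M : Fin n → Matrix (ZMod 2) (ZMod 2) ℂ) :
    (tens M)ᴴ = tens fun i => (M i)ᴴ := by
  ext f g
  simp [tens, Matrix.conjTranspose_apply, star_prod]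

lemma tens_one {n : ℕ} : tens (fun _ : Fin n => (1 : Matrix (ZMod 2) (ZMod 2) ℂ)) = 1 := by
  ext f g
  by_cases h : f = g
  · subst h; simp [tens, Matrix.one_apply]
  · obtain ⟨i, hi⟩ := Function.ne_iff.mp h
    rw [Matrix.one_apply_ne h]
    exact Finset.prod_eq_zero (mem_univ i) (by simp [Matrix.one_apply, hi])

lemma tens_mul_comm {n : ℕ} (M N : Fin n → Matrix (ZMod 2) (ZMod 2) ℂ) (c : Fin n → ℂ)
    (h : ∀ i, M i * N i = c i • (N i * M i)) :
    tens M * tens N = (∏ i, c i) • (tens N * tens M) := by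
  rw [tens_mul, tens_mul]
  ext f g
  simp only [tens, of_apply, Matrix.smul_apply, smul_eq_mul]
  rw [← Finset.prod_mul_distrib]
  exact Finset.prod_congr rfl fun i _ => by rw [h i]; simp [Matrix.smul_apply]

lemma extend_mul {n : ℕ} (A B : Matrix (Fin n → ZMod 2) (Fin n → ZMod 2) ℂ)
    (M N : Matrix (ZMod 2) (ZMod 2) ℂ) :
    extend A M * extend B N = extend (A * B) (M * N) := by
  have key : ∀ (a c : (Fin n → ZMod 2) → ℂ) (b d : ZMod 2 → ℂ),
      (∑ x : ZMod 2, ∑ q : Fin n → ZMod 2, (a q * b x) * (c q * d x))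
        = (∑ q, a q * c q) * (∑ x, b x * d x) := by
    intro a c b d
    rw [Finset.sum_comm, Finset.sum_mul_sum]
    exact Finset.sum_congr rfl fun q _ => Finset.sum_congr rfl fun x _ =>
      mul_mul_mul_comm _ _ _ _
  ext f g
  rw [Matrix.mul_apply, ← Equiv.sum_comp (Fin.snocEquiv (fun _ => ZMod 2)),
    Fintype.sum_prod_type]
  simp only [extend, of_apply, Fin.snocEquiv_apply, Fin.snoc_castSucc, Fin.snoc_last]
  rw [key]
  rw [Matrix.mul_apply, Matrix.mul_apply]

lemma extend_conjTranspose {n : ℕ} (A : Matrix (Fin n → ZMod 2) (Fin n → ZMod 2) ℂ)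
    (M : Matrix (ZMod 2) (ZMod 2) ℂ) : (extend A M)ᴴ = extend Aᴴ Mᴴ := by
  ext f g
  simp [extend, Matrix.conjTranspose_apply, star_mul']

lemma extend_smul_left {n : ℕ} (c : ℂ) (A : Matrix (Fin n → ZMod 2) (Fin n → ZMod 2) ℂ)
    (M : Matrix (ZMod 2) (ZMod 2) ℂ) : extend (c • A) M = c • extend A M := by
  ext f g; simp [extend, Matrix.smul_apply, mul_assoc]

lemma extend_smul_right {n : ℕ} (c : ℂ) (A : Matrix (Fin n → ZMod 2) (Fin n → ZMod 2) ℂ)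
    (M : Matrix (ZMod 2) (ZMod 2) ℂ) : extend A (c • M) = c • extend A M := by
  ext f g; simp [extend, Matrix.smul_apply]; ring

lemma extend_one {n : ℕ} :
    extend (1 : Matrix (Fin n → ZMod 2) (Fin n → ZMod 2) ℂ) (1 : Matrix (ZMod 2) (ZMod 2) ℂ)
      = 1 := by
  ext f g
  by_cases h : f = g
  · subst h; simp [extend, Matrix.one_apply]
  · rw [Matrix.one_apply_ne h]
    simp only [extend, of_apply]
    by_cases hl : f (Fin.last n) = g (Fin.last n)
    · have hne : (fun j : Fin n => f j.castSucc) ≠ fun j => g j.castSucc := by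
        intro he
        apply h; funext i
        refine Fin.lastCases hl (fun j => ?_) i
        exact congrFun he j
      rw [Matrix.one_apply_ne hne, zero_mul]
    · rw [Matrix.one_apply_ne hl, mul_zero]


noncomputable def gf (n k : ℕ) : Fin n → Matrix (ZMod 2) (ZMod 2) ℂ :=
  fun j => if (j : ℕ) < k / 2 then Z
    else if (j : ℕ) = k / 2 then (if k % 2 = 0 then X else Y) else 1

lemma gamma_eq (n k : ℕ) : gamma n k = tens (gf n k) := rfl

lemma gamma_sq (n k : ℕ) : gamma n k * gamma n k = 1 := by
  rw [gamma_eq, tens_mul]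
  have : (fun i => gf n k i * gf n k i) = fun _ : Fin n => (1 : Matrix (ZMod 2) (ZMod 2) ℂ) := by
    funext i
    simp only [gf]
    split_ifs <;> simp [X_mul_X, Y_mul_Y, Z_mul_Z]
  rw [this, tens_one]

lemma gamma_herm (n k : ℕ) : (gamma n k)ᴴ = gamma n k := by
  rw [gamma_eq, tens_conjTranspose]
  have : (fun i => (gf n k i)ᴴ) = gf n k := by
    funext i
    simp only [gf]
    split_ifs <;> simp [X_herm, Y_herm, Z_herm]
  rw [this]

lemma prod_sign (n a : ℕ) (ha : a < n) :
    ∏ i : Fin n, (if (i : ℕ) = a then (-1 : ℂ) else 1) = -1 := by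
  rw [Finset.prod_eq_single (⟨a, ha⟩ : Fin n)
    (fun b _ hb => if_neg fun hba => hb (Fin.ext hba))
    (fun h => absurd (Finset.mem_univ _) h), if_pos rfl]

lemma gamma_anticomm_lt (n j k : ℕ) (hjk : j < k) (hj : j / 2 < n) :
    gamma n j * gamma n k = (-1 : ℂ) • (gamma n k * gamma n j) := by
  rw [gamma_eq, gamma_eq,
    tens_mul_comm (gf n j) (gf n k) (fun i => if (i : ℕ) = j / 2 then (-1 : ℂ) else 1) ?_,
    prod_sign n (j / 2) hj]
  intro i
  have hdiv : j / 2 ≤ k / 2 := Nat.div_le_div_right hjk.le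
  simp only [gf]
  rcases lt_trichotomy ((i : ℕ)) (j / 2) with h1 | h1 | h1
  · have h2 : (i : ℕ) < k / 2 := lt_of_lt_of_le h1 hdiv
    have h3 : ¬ ((i : ℕ) = j / 2) := by omega
    simp only [if_pos h1, if_pos h2, if_neg h3, one_smul]
  · have h4 : ¬ ((i : ℕ) < j / 2) := by omega
    rcases lt_or_eq_of_le hdiv with h2 | h2
    · have h5 : (i : ℕ) < k / 2 := by omega
      simp only [if_neg h4, if_pos h1, if_pos h5]
      split_ifs <;> [exact X_mul_Z; exact Y_mul_Z]
    · have h5 : ¬ ((i : ℕ) < k / 2) := by omega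
      have h6 : (i : ℕ) = k / 2 := by omega
      have hje : j % 2 = 0 := by omega
      have hke : ¬ (k % 2 = 0) := by omega
      simp only [if_neg h4, if_pos h1, if_neg h5, if_pos h6, if_pos hje, if_neg hke]
      exact X_mul_Y
  · have h4 : ¬ ((i : ℕ) < j / 2) := by omega
    have h5 : ¬ ((i : ℕ) = j / 2) := by omega
    simp only [if_neg h4, if_neg h5, one_smul, one_mul, mul_one]

lemma gamma_anticomm (n j k : ℕ) (hjk : j ≠ k) (hj : j / 2 < n) (hk : k / 2 < n) :
    gamma n j * gamma n k = (-1 : ℂ) • (gamma n k * gamma n j) := by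
  rcases Nat.lt_or_ge j k with h | h
  · exact gamma_anticomm_lt n j k h hj
  · have h' : k < j := by omega
    rw [gamma_anticomm_lt n k j h' hk, smul_smul]
    norm_num

lemma gamma_zstr (n k : ℕ) (hk : k / 2 < n) (I : Finset (Fin n)) :
    gamma n k * Zstr I =
      (if (⟨k / 2, hk⟩ : Fin n) ∈ I then (-1 : ℂ) else 1) • (Zstr I * gamma n k) := by
  rw [gamma_eq, show Zstr I = tens (fun j => if j ∈ I then Z else 1) from rfl,
    tens_mul_comm (gf n k) _
      (fun i => if (i : ℕ) = k / 2 ∧ i ∈ I then (-1 : ℂ) else 1) ?_]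
  · congr 1
    by_cases hm : (⟨k / 2, hk⟩ : Fin n) ∈ I
    · rw [if_pos hm,
        Finset.prod_eq_single (⟨k / 2, hk⟩ : Fin n)
          (fun b _ hb => if_neg fun hc => hb (Fin.ext hc.1))
          (fun h => absurd (Finset.mem_univ _) h),
        if_pos ⟨rfl, hm⟩]
    · rw [if_neg hm]
      refine Finset.prod_eq_one fun b _ => if_neg ?_
      rintro ⟨hb1, hb2⟩
      exact hm ((Fin.ext hb1 : b = ⟨k / 2, hk⟩) ▸ hb2)
  · intro i
    simp only [gf]
    rcases lt_trichotomy ((i : ℕ)) (k / 2) with h1 | h1 | h1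
    · have h3 : ¬ ((i : ℕ) = k / 2 ∧ i ∈ I) := fun hc => (by omega : ¬ ((i : ℕ) = k / 2)) hc.1
      simp only [if_pos h1, if_neg h3, one_smul]
      by_cases hi : i ∈ I
      · simp only [if_pos hi]
      · simp only [if_neg hi, one_mul, mul_one]
    · have h4 : ¬ ((i : ℕ) < k / 2) := by omega
      by_cases hi : i ∈ I
      · simp only [if_neg h4, if_pos h1, if_pos hi, if_pos (And.intro h1 hi)]
        split_ifs <;> [exact X_mul_Z; exact Y_mul_Z]
      · have h5 : ¬ ((i : ℕ) = k / 2 ∧ i ∈ I) := fun hc => hi hc.2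
        simp only [if_neg h4, if_pos h1, if_neg hi, if_neg h5, one_smul, one_mul, mul_one]
    · have h4 : ¬ ((i : ℕ) < k / 2) := by omega
      have h5 : ¬ ((i : ℕ) = k / 2) := by omega
      have h6 : ¬ ((i : ℕ) = k / 2 ∧ i ∈ I) := fun hc => h5 hc.1
      simp only [if_neg h4, if_neg h5, if_neg h6, one_smul, one_mul, mul_one]


lemma mu_eq {n : ℕ} (I : Finset (Fin n)) {k : ℕ} (h : k / 2 < n) :
    mu n I k = extend (gamma n k) (if (⟨k / 2, h⟩ : Fin n) ∈ I then X else 1) := by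
  rw [mu, dif_pos h]
  split_ifs <;> rfl

lemma zstr_herm {n : ℕ} (I : Finset (Fin n)) : (Zstr I)ᴴ = Zstr I := by
  rw [Zstr, tens_conjTranspose]
  have : (fun i => (if i ∈ I then Z else 1)ᴴ) = fun j => if j ∈ I then Z else 1 := by
    funext i; split_ifs <;> simp [Z_herm]
  rw [this]

lemma zstr_sq {n : ℕ} (I : Finset (Fin n)) : Zstr I * Zstr I = 1 := by
  rw [Zstr, tens_mul]
  have : (fun i => (if i ∈ I then Z else 1) * (if i ∈ I then Z else 1))
      = fun _ : Fin n => (1 : Matrix (ZMod 2) (ZMod 2) ℂ) := by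
    funext i; split_ifs <;> simp [Z_mul_Z]
  rw [this, tens_one]

lemma anc_comm (P Q : Prop) [Decidable P] [Decidable Q] :
    (if P then X else 1) * (if Q then X else 1) = (if Q then X else 1) * (if P then X else 1) := by
  split_ifs <;> simp

lemma anc_sq (P : Prop) [Decidable P] :
    (if P then X else 1) * (if P then X else 1) = 1 := by
  split_ifs <;> simp [X_mul_X]

/-- for the stabilizer `S = Z_I ⊗ Z` and modified Majorana operators
`μ_k = Γ_k ⊗ X` (if `⌊k/2⌋ ∈ I`) or `Γ_k ⊗ I₂` (otherwise) on `(ℂ²)^⊗(n+1)`: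
`S` is self-adjoint with `S² = I`, each `μ_k` is self-adjoint, the `μ_k` satisfy the Majorana
anticommutation relations, and each `μ_k` commutes with `S`. -/
theorem ancilla_majorana_operators (n : ℕ) (hn : 1 ≤ n) (I : Finset (Fin n)) :
    (stab n I)ᴴ = stab n I ∧
    stab n I * stab n I = 1 ∧
    (∀ k, k < 2 * n → (mu n I k)ᴴ = mu n I k) ∧
    (∀ j k, j < 2 * n → k < 2 * n →
      mu n I j * mu n I k + mu n I k * mu n I j =
        if j = k then
          (2 : ℂ) • (1 : Matrix (Fin (n + 1) → ZMod 2) (Fin (n + 1) → ZMod 2) ℂ)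
        else 0) ∧
    (∀ k, k < 2 * n → mu n I k * stab n I = stab n I * mu n I k) := by
  refine ⟨?_, ?_, ?_, ?_, ?_⟩
  · rw [stab, extend_conjTranspose, zstr_herm, Z_herm]
  · rw [stab, extend_mul, Z_mul_Z, zstr_sq, extend_one]
  · intro k hk
    have h2 : k / 2 < n := by omega
    rw [mu_eq I h2, extend_conjTranspose, gamma_herm]
    have : (if (⟨k / 2, h2⟩ : Fin n) ∈ I then X else 1)ᴴ
        = (if (⟨k / 2, h2⟩ : Fin n) ∈ I then X else 1) := by
      split_ifs <;> simp [X_herm]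
    rw [this]
  · intro j k hj hk
    have hj2 : j / 2 < n := by omega
    have hk2 : k / 2 < n := by omega
    rw [mu_eq I hj2, mu_eq I hk2, extend_mul, extend_mul]
    by_cases hjk : j = k
    · subst hjk
      rw [if_pos rfl, gamma_sq, anc_sq, extend_one, two_smul]
    · rw [if_neg hjk, gamma_anticomm n j k hjk hj2 hk2, extend_smul_left,
        anc_comm, neg_one_smul]
      exact neg_add_cancel _
  · intro k hk
    have hk2 : k / 2 < n := by omega
    rw [mu_eq I hk2, stab, extend_mul, extend_mul]
    have hg := gamma_zstr n k hk2 I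
    by_cases hm : (⟨k / 2, hk2⟩ : Fin n) ∈ I
    · rw [if_pos hm] at hg ⊢
      rw [hg, X_mul_Z, extend_smul_left, extend_smul_right, smul_smul]
      norm_num
    · rw [if_neg hm] at hg ⊢
      rw [hg, one_smul, one_mul, mul_one]

end FQ
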